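/- In the k-fold Cartesian power G^k of a connected graph G, any two vertices in the same S_k-orbit (i.e., k-tuples that are coordinate permutations of each other) are connected by a path P in G^k such that η*(P) = 0, where η*: E(G^k) → E(G^(k)) is the map on edge spaces induced by the quotient projection η: G^k → G^(k). -/

import Mathlib

open Finset
open scoped Classical

variable {V W : Type*}

/-- The reduced `k`-th power of a graph `G`: vertices are size-`k` multisets
(degree-`k` monic monomials) of vertices of `G`; `a·f` is adjacent to `b·f`
whenever `ab ∈ E(G)` and `f` is a degree-`(k-1)` monomial. -/
def reducedPow (G : SimpleGraph V) (k : ℕ) : SimpleGraph (Sym V k) :=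
  SimpleGraph.fromRel (fun m m' => ∃ a b : V, G.Adj a b ∧
    ∃ f : Multiset V, (m : Multiset V) = a ::ₘ f ∧ (m' : Multiset V) = b ::ₘ f)

/-- The `k`-fold Cartesian power of a graph. -/
def cartPow (G : SimpleGraph V) (k : ℕ) : SimpleGraph (Fin k → V) :=
  SimpleGraph.fromRel (fun x y => ∃ i, G.Adj (x i) (y i) ∧ ∀ j, j ≠ i → x j = y j)

/-- The quotient map `G^k → G^(k)` sending a tuple to its multiset of coordinates. -/
def symOfTuple (k : ℕ) (x : Fin k → V) : Sym V k :=
  ⟨(List.ofFn x : List V), by simp⟩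

/-- The linear map on edge spaces induced by a vertex map `φ` (a weak homomorphism):
an edge maps to its image if the image is a genuine edge, and to `0` if it collapses. -/
noncomputable def inducedMap (φ : V → W) [Fintype V] :
    (Sym2 V → ZMod 2) →ₗ[ZMod 2] (Sym2 W → ZMod 2) where
  toFun x e' := if e'.IsDiag then 0 else ∑ e : Sym2 V, if Sym2.map φ e = e' then x e else 0
  map_add' x y := by
    funext e'
    try dsimp only
    by_cases h : e'.IsDiag
    · simp [h]
    · rw [Pi.add_apply, if_neg h, if_neg h, if_neg h, ← Finset.sum_add_distrib]
      exact Finset.sum_congr rfl (fun e _ => by split <;> simp)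
  map_smul' c x := by
    funext e'
    try dsimp only
    by_cases h : e'.IsDiag
    · simp [h]
    · rw [RingHom.id_apply, Pi.smul_apply, smul_eq_mul, if_neg h, if_neg h, Finset.mul_sum]
      exact Finset.sum_congr rfl (fun e _ => by split <;> simp)


set_option linter.unusedSectionVars false

set_option maxHeartbeats 1000000

section Aux
variable {k : ℕ} [Fintype V] [DecidableEq V] {G : SimpleGraph V}

lemma symOfTuple_comp_perm (z : Fin k → V) (e : Equiv.Perm (Fin k)) :
    symOfTuple k (z ∘ e) = symOfTuple k z :=
  Subtype.ext (Multiset.coe_eq_coe.mpr (e.ofFn_comp_perm z))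

lemma count_symOfTuple (x : Fin k → V) (c : V) :
    Multiset.count c ((symOfTuple k x : Sym V k) : Multiset V)
      = (Finset.univ.filter (fun l => x l = c)).card := by
  have h1 : ((symOfTuple k x : Sym V k) : Multiset V) = Multiset.map x Finset.univ.val :=
    (Fin.univ_val_map x).symm
  rw [h1, Multiset.count_map, Finset.card_def, Finset.filter_val]
  exact congrArg Multiset.card (Multiset.filter_congr (fun a _ => eq_comm))

lemma exists_partner {x y : Fin k → V} (hsym : symOfTuple k x = symOfTuple k y)
    {j : Fin k} (hj : x j ≠ y j) : ∃ i : Fin k, x i = y j ∧ y i ≠ y j := by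
  have hcount : (univ.filter (fun l => x l = y j)).card
      = (univ.filter (fun l => y l = y j)).card := by
    rw [← count_symOfTuple, ← count_symOfTuple, hsym]
  by_contra hcon
  push_neg at hcon
  have hsub : univ.filter (fun l => x l = y j) ⊆ (univ.filter (fun l => y l = y j)).erase j := by
    intro l hl
    simp only [Finset.mem_filter, Finset.mem_univ, true_and] at hl
    refine Finset.mem_erase.mpr ⟨?_, by simp [hcon l hl]⟩
    rintro rfl; exact hj hl
  have hjmem : j ∈ univ.filter (fun l => y l = y j) := by simp
  have h1 := Finset.card_le_card hsub
  rw [Finset.card_erase_of_mem hjmem] at h1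
  have h2 : 0 < (univ.filter (fun l => y l = y j)).card := Finset.card_pos.mpr ⟨j, hjmem⟩
  omega

/-- swap identity: updating `i` then `j` is a coordinate swap of updating `i` alone. -/
lemma update_update_swap (x : Fin k → V) {i j : Fin k} (hij : i ≠ j) (w : V) :
    Function.update (Function.update x i (x j)) j w
      = (Function.update x i w) ∘ (Equiv.swap i j) := by
  funext l
  simp only [Function.comp_apply]
  rcases eq_or_ne l j with rfl | hlj
  · rw [Function.update_self, Equiv.swap_apply_right, Function.update_self]
  · rcases eq_or_ne l i with rfl | hli
    · rw [Function.update_of_ne hlj, Function.update_self, Equiv.swap_apply_left,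
        Function.update_of_ne hlj.symm]
    · rw [Function.update_of_ne hlj, Function.update_of_ne hli,
        Equiv.swap_apply_of_ne_of_ne hli hlj, Function.update_of_ne hli]

end Aux

section Key
variable {k : ℕ} [Fintype V] [DecidableEq V]

lemma cartPow_adj_update {G : SimpleGraph V} {a c : V} (h : G.Adj a c) (i : Fin k)
    (z : Fin k → V) :
    (cartPow G k).Adj (Function.update z i a) (Function.update z i c) := by
  rw [cartPow, SimpleGraph.fromRel_adj]
  refine ⟨fun hc => h.ne (by simpa using congrFun hc i),
    Or.inl ⟨i, by simpa using h, fun j hj => by simp [Function.update_of_ne hj]⟩⟩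

def liftW {G : SimpleGraph V} (i : Fin k) (z : Fin k → V) : ∀ {a b : V}, G.Walk a b →
    (cartPow G k).Walk (Function.update z i a) (Function.update z i b)
  | _, _, SimpleGraph.Walk.nil => SimpleGraph.Walk.nil
  | _, _, SimpleGraph.Walk.cons h p =>
      SimpleGraph.Walk.cons (cartPow_adj_update h i z) (liftW i z p)

@[simp] lemma liftW_support {G : SimpleGraph V} (i : Fin k) (z : Fin k → V) {a b : V}
    (p : G.Walk a b) :
    (liftW i z p).support = p.support.map (fun v => Function.update z i v) := by
  induction p with
  | nil => simp [liftW]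
  | cons h p ih => simp [liftW, ih]

@[simp] lemma liftW_edges {G : SimpleGraph V} (i : Fin k) (z : Fin k → V) {a b : V}
    (p : G.Walk a b) :
    (liftW i z p).edges = p.edges.map (Sym2.map (fun v => Function.update z i v)) := by
  induction p with
  | nil => simp [liftW]
  | cons h p ih => simp [liftW, ih, Sym2.map_pair_eq]

lemma update_injective (z : Fin k → V) (i : Fin k) :
    Function.Injective (fun v => Function.update z i v) := fun u v h => by
  simpa using congrFun h i

lemma liftW_isPath {G : SimpleGraph V} (i : Fin k) (z : Fin k → V) {a b : V} {p : G.Walk a b}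
    (hp : p.IsPath) : (liftW i z p).IsPath := by
  rw [SimpleGraph.Walk.isPath_def, liftW_support]
  exact hp.support_nodup.map (update_injective z i)

lemma isPath_append {α : Type*} {G' : SimpleGraph α} {u v w : α} {p : G'.Walk u v}
    {q : G'.Walk v w} (hp : p.IsPath) (hq : q.IsPath)
    (h : ∀ z, z ∈ p.support → z ∈ q.support → z = v) : (p.append q).IsPath := by
  rw [SimpleGraph.Walk.isPath_def, SimpleGraph.Walk.support_append]
  refine List.Nodup.append hp.support_nodup (hq.support_nodup.tail) ?_
  intro z hz hz'
  have hzq : z ∈ q.support := List.mem_of_mem_tail hz'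
  have hzv := h z hz hzq
  subst hzv
  have hnd := hq.support_nodup
  rw [q.support_eq_cons] at hnd
  exact (List.nodup_cons.mp hnd).1 hz'

lemma key (G : SimpleGraph V) (hG : G.Connected) :
    ∀ (n : ℕ) (x y : Fin k → V),
      (Finset.univ.filter (fun l => x l ≠ y l)).card ≤ n →
      symOfTuple k x = symOfTuple k y →
      ∃ P : (cartPow G k).Walk x y, P.IsPath ∧
        (∀ e' : Sym2 (Sym V k),
          Even (P.edges.countP (fun e => decide (Sym2.map (symOfTuple k) e = e')))) ∧
        (∀ v ∈ P.support, ∀ l, x l = y l → v l = y l) := by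
  intro n
  induction n with
  | zero =>
    intro x y hcard _
    have hxy : x = y := by
      funext l
      by_contra hne
      have : l ∈ Finset.univ.filter (fun l => x l ≠ y l) := by simp [hne]
      have := Finset.card_pos.mpr ⟨l, this⟩
      omega
    subst hxy
    exact ⟨SimpleGraph.Walk.nil, SimpleGraph.Walk.IsPath.nil, by simp, by simp⟩
  | succ n ih =>
    intro x y hcard hsym
    by_cases hxy : x = y
    · subst hxy
      exact ⟨SimpleGraph.Walk.nil, SimpleGraph.Walk.IsPath.nil, by simp, by simp⟩
    have hj' : ∃ j, x j ≠ y j := by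
      by_contra hc; push_neg at hc; exact hxy (funext hc)
    obtain ⟨j, hj⟩ := hj'
    obtain ⟨i, hia, hib⟩ := exists_partner hsym hj
    -- hia : x i = y j,  hib : y i ≠ y j
    have hxi : x i ≠ y i := fun h => hib (h ▸ hia)
    have hij : i ≠ j := fun h => hj (h ▸ hia)
    have hab : x i ≠ x j := fun h => hj (h.symm.trans hia)
    obtain ⟨p0⟩ := hG.preconnected (x i) (x j)
    set p := p0.bypass with hpdef
    have hp : p.IsPath := p0.bypass_isPath
    set x₁ := Function.update x i (x j) with hx₁def
    set x' := Function.update x₁ j (x i) with hx'def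
    have hx₁j : x₁ j = x j := Function.update_of_ne hij.symm _ _
    have hx₁i : x₁ i = x j := Function.update_self _ _ _
    have hx'j : x' j = x i := Function.update_self _ _ _
    have hx'i : x' i = x j := by rw [hx'def, Function.update_of_ne hij, hx₁i]
    -- the two lifted segments
    have hstart : Function.update x i (x i) = x := Function.update_eq_self i x
    have hend2 : Function.update x₁ j (x j) = x₁ := by
      conv_lhs => rw [← hx₁j]
      exact Function.update_eq_self j x₁
    set W₁ : (cartPow G k).Walk x x₁ := (liftW i x p).copy hstart rfl with hW₁def
    set W₂ : (cartPow G k).Walk x₁ x' := ((liftW j x₁ p).copy rfl hend2).reverse with hW₂def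
    -- apply the induction hypothesis to x'
    have hswap : ∀ w : V, Function.update x₁ j w = (Function.update x i w) ∘ (Equiv.swap i j) :=
      fun w => update_update_swap x hij w
    have hsymx' : symOfTuple k x' = symOfTuple k y := by
      rw [hx'def, hswap, symOfTuple_comp_perm, hstart, hsym]
    have hsub : Finset.univ.filter (fun l => x' l ≠ y l)
        ⊆ (Finset.univ.filter (fun l => x l ≠ y l)).erase j := by
      intro l hl
      simp only [Finset.mem_filter, Finset.mem_univ, true_and] at hl
      have hlj : l ≠ j := by rintro rfl; exact hl (hx'j ▸ hia)
      refine Finset.mem_erase.mpr ⟨hlj, ?_⟩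
      simp only [Finset.mem_filter, Finset.mem_univ, true_and]
      rcases eq_or_ne l i with rfl | hli
      · exact hxi
      · intro hc
        apply hl
        rw [hx'def, Function.update_of_ne hlj, hx₁def, Function.update_of_ne hli]
        exact hc
    have hjmem : j ∈ Finset.univ.filter (fun l => x l ≠ y l) := by simp [hj]
    have hcard' : (Finset.univ.filter (fun l => x' l ≠ y l)).card ≤ n := by
      have h1 := Finset.card_le_card hsub
      rw [Finset.card_erase_of_mem hjmem] at h1
      omega
    obtain ⟨P', hP', hEv', hInv'⟩ := ih x' y hcard' hsymx'
    -- support membership characterizations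
    have memW₁ : ∀ z ∈ W₁.support, ∃ w ∈ p.support, z = Function.update x i w := by
      intro z hz
      rw [hW₁def, SimpleGraph.Walk.support_copy, liftW_support] at hz
      obtain ⟨w, hw, rfl⟩ := List.mem_map.mp hz
      exact ⟨w, hw, rfl⟩
    have memW₂ : ∀ z ∈ W₂.support, ∃ w ∈ p.support, z = Function.update x₁ j w := by
      intro z hz
      rw [hW₂def, SimpleGraph.Walk.support_reverse, List.mem_reverse,
        SimpleGraph.Walk.support_copy, liftW_support] at hz
      obtain ⟨w, hw, rfl⟩ := List.mem_map.mp hz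
      exact ⟨w, hw, rfl⟩
    have hx'jy : x' j = y j := hx'j.trans hia
    have factP' : ∀ z ∈ P'.support, z j = x i := by
      intro z hz
      rw [hInv' z hz j hx'jy, ← hia]
    -- path components
    have hW₁path : W₁.IsPath := by
      rw [hW₁def, SimpleGraph.Walk.isPath_copy]
      exact liftW_isPath i x hp
    have hW₂path : W₂.IsPath := by
      rw [hW₂def]
      exact ((SimpleGraph.Walk.isPath_copy _ rfl hend2).mpr (liftW_isPath j x₁ hp)).reverse
    have ovW₂P' : ∀ z, z ∈ W₂.support → z ∈ P'.support → z = x' := by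
      intro z hz2 hzP
      obtain ⟨w, hw, rfl⟩ := memW₂ z hz2
      have hwa : w = x i := by
        have h1 := factP' _ hzP
        rwa [Function.update_self] at h1
      rw [hwa, ← hx'def]
    have inner : (W₂.append P').IsPath := isPath_append hW₂path hP' ovW₂P'
    have ovW₁rest : ∀ z, z ∈ W₁.support → z ∈ (W₂.append P').support → z = x₁ := by
      intro z hz1 hz
      rw [SimpleGraph.Walk.mem_support_append_iff] at hz
      obtain ⟨w, hw, rfl⟩ := memW₁ z hz1
      rcases hz with hz2 | hzP
      · obtain ⟨w', hw', he⟩ := memW₂ _ hz2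
        have hwv : w = x j := by
          have h2 := congrFun he i
          rwa [Function.update_self, Function.update_of_ne hij, hx₁i] at h2
        rw [hwv, ← hx₁def]
      · exfalso
        have h1 := factP' _ hzP
        rw [Function.update_of_ne hij.symm] at h1
        exact hab h1.symm
    refine ⟨W₁.append (W₂.append P'), isPath_append hW₁path inner ovW₁rest, ?_, ?_⟩
    · -- parity
      intro e'
      have hcomp : (fun w => symOfTuple k (Function.update x₁ j w))
          = (fun w => symOfTuple k (Function.update x i w)) := by
        funext w
        rw [hswap w, symOfTuple_comp_perm]
      have hedges₁ : W₁.edges = p.edges.map (Sym2.map (fun v => Function.update x i v)) := by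
        rw [hW₁def, SimpleGraph.Walk.edges_copy, liftW_edges]
      have hedges₂ : W₂.edges
          = (p.edges.map (Sym2.map (fun v => Function.update x₁ j v))).reverse := by
        rw [hW₂def, SimpleGraph.Walk.edges_reverse, SimpleGraph.Walk.edges_copy, liftW_edges]
      rw [SimpleGraph.Walk.edges_append, SimpleGraph.Walk.edges_append, List.countP_append,
        List.countP_append, hedges₁, hedges₂, List.countP_reverse, List.countP_map,
        List.countP_map]
      have hpred : ((fun e => decide (Sym2.map (symOfTuple k) e = e'))
            ∘ (Sym2.map fun v => Function.update x₁ j v))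
          = ((fun e => decide (Sym2.map (symOfTuple k) e = e'))
            ∘ (Sym2.map fun v => Function.update x i v)) := by
        funext e0
        simp only [Function.comp_apply, Sym2.map_map, Function.comp_def, hcomp]
      rw [hpred]
      obtain ⟨m, hm⟩ := hEv' e'
      refine ⟨List.countP ((fun e => decide (Sym2.map (symOfTuple k) e = e'))
        ∘ (Sym2.map fun v => Function.update x i v)) p.edges + m, ?_⟩
      omega
    · -- invariant
      intro v hv l hxl
      have hli : l ≠ i := fun h => hxi (h ▸ hxl)
      have hlj : l ≠ j := fun h => hj (h ▸ hxl)
      rw [SimpleGraph.Walk.mem_support_append_iff,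
        SimpleGraph.Walk.mem_support_append_iff] at hv
      rcases hv with hv1 | hv2 | hvP
      · obtain ⟨w, _, rfl⟩ := memW₁ v hv1
        rw [Function.update_of_ne hli]
        exact hxl
      · obtain ⟨w, _, rfl⟩ := memW₂ v hv2
        rw [Function.update_of_ne hlj, hx₁def, Function.update_of_ne hli]
        exact hxl
      · refine hInv' v hvP l ?_
        rw [hx'def, Function.update_of_ne hlj, hx₁def, Function.update_of_ne hli]
        exact hxl
end Key

lemma induced_eq_zero {k : ℕ} [Fintype V] [DecidableEq V] {G : SimpleGraph V}
    {x y : Fin k → V} (P : (cartPow G k).Walk x y) (hN : P.edges.Nodup)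
    (h : ∀ e' : Sym2 (Sym V k),
      Even (P.edges.countP (fun e => decide (Sym2.map (symOfTuple k) e = e')))) :
    inducedMap (symOfTuple k) (fun e => if e ∈ P.edges then 1 else 0) = 0 := by
  funext e'
  simp only [inducedMap, LinearMap.coe_mk, AddHom.coe_mk, Pi.zero_apply]
  by_cases hd : e'.IsDiag
  · simp [hd]
  rw [if_neg hd]
  have hterm : ∀ e : Sym2 (Fin k → V),
      (if Sym2.map (symOfTuple k) e = e' then (if e ∈ P.edges then (1 : ZMod 2) else 0) else 0)
        = if (e ∈ P.edges ∧ Sym2.map (symOfTuple k) e = e') then 1 else 0 := by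
    intro e
    by_cases h1 : Sym2.map (symOfTuple k) e = e' <;> by_cases h2 : e ∈ P.edges <;>
      simp [h1, h2]
  rw [Finset.sum_congr rfl (fun e _ => hterm e), Finset.sum_boole]
  have hset : Finset.univ.filter (fun e => e ∈ P.edges ∧ Sym2.map (symOfTuple k) e = e')
      = (P.edges.filter (fun e => decide (Sym2.map (symOfTuple k) e = e'))).toFinset := by
    ext e
    simp [List.mem_filter, and_comm]
  rw [hset, List.toFinset_card_of_nodup (hN.filter _), ← List.countP_eq_length_filter]
  obtain ⟨m, hm⟩ := h e'
  rw [hm, Nat.cast_add, ← two_mul, show (2 : ZMod 2) = 0 by decide, zero_mul]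

/-- In the Cartesian power `G^k` of a connected graph `G`, any two vertices lying in
the same `S_k`-orbit (coordinate permutations of one another) are joined by a path `P`
with `η*(P) = 0`, where `η* ` is the map induced on `𝔽₂` edge spaces by the quotient
projection `η : G^k → G^(k)`. -/
theorem stmt_12 [Fintype V] [DecidableEq V] (G : SimpleGraph V) (hG : G.Connected)
    (k : ℕ) (x y : Fin k → V) (hperm : ∃ σ : Equiv.Perm (Fin k), x = y ∘ σ) :
    ∃ P : (cartPow G k).Walk x y, P.IsPath ∧
      inducedMap (symOfTuple k) (fun e => if e ∈ P.edges then 1 else 0) = 0     := by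
  obtain ⟨σ, hx⟩ := hperm
  have hsym : symOfTuple k x = symOfTuple k y := by
    rw [hx]; exact symOfTuple_comp_perm y σ
  obtain ⟨P, hP, hEv, -⟩ := key G hG ((Finset.univ.filter (fun l => x l ≠ y l)).card) x y
    le_rfl hsym
  exact ⟨P, hP, induced_eq_zero P hP.isTrail.edges_nodup hEv⟩
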